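/- For m ∈ SL(2,ℝ), O(m) = I₃ if and only if m = I₂ or m = −I₂. Consequently, for m, m' ∈ SL(2,ℝ), O(m) = O(m') if and only if m' = m or m' = −m; thus the map m ↦ O(m) is exactly two-to-one, exhibiting SL(2,ℝ) as a double cover of its image in the η-orthogonal group O(1,2). -/

import Mathlib

open Matrix

/-- The three gamma matrices `γ₁ = [[0,0],[1,0]]`, `γ₂ = (1/√2)·[[−1,0],[0,1]]`,
`γ₃ = [[0,1],[0,0]]`. -/
noncomputable def gammaMat : Fin 3 → Matrix (Fin 2) (Fin 2) ℝ :=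
  ![!![0, 0; 1, 0],
    (Real.sqrt 2)⁻¹ • !![-1, 0; 0, 1],
    !![0, 1; 0, 0]]

/-- The symmetric bilinear form `η = [[0,0,1],[0,1,0],[1,0,0]]` of signature `(2,1)`. -/
def etaMat : Matrix (Fin 3) (Fin 3) ℝ := !![0, 0, 1; 0, 1, 0; 1, 0, 0]

/-- The vector (adjoint) image `O(m)ᵢⱼ = Σₖ Tr(m⁻¹·γᵢ·m·γₖ)·ηₖⱼ` of `m ∈ SL(2,ℝ)`. -/
noncomputable def Omat (m : Matrix (Fin 2) (Fin 2) ℝ) : Matrix (Fin 3) (Fin 3) ℝ :=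
  Matrix.of fun i j => ∑ k : Fin 3, (m⁻¹ * gammaMat i * m * gammaMat k).trace * etaMat k j

lemma Omat_explicit (a b c d : ℝ) (h : a*d - b*c = 1) :
    Omat !![a,b;c,d] = !![a^2, Real.sqrt 2*(a*b), -b^2;
                          Real.sqrt 2*(a*c), a*d+b*c, -(Real.sqrt 2*(b*d));
                          -c^2, -(Real.sqrt 2*(c*d)), d^2] := by
  have hinv : (!![a,b;c,d] : Matrix (Fin 2) (Fin 2) ℝ)⁻¹ = !![d,-b;-c,a] := by
    apply inv_eq_right_inv
    ext i j
    fin_cases i <;> fin_cases j <;>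
      simp [Matrix.mul_apply, Fin.sum_univ_two, Matrix.one_apply] <;> linarith
  have h2 : Real.sqrt 2 * Real.sqrt 2 = 2 := Real.mul_self_sqrt (by norm_num)
  have hi : (Real.sqrt 2)⁻¹ = Real.sqrt 2 / 2 := by
    field_simp
    rw [Real.sq_sqrt (by norm_num : (0:ℝ) ≤ 2)]
  ext i j
  fin_cases i <;> fin_cases j <;>
    simp [Omat, gammaMat, etaMat, hinv, hi, Fin.sum_univ_three, Matrix.trace_fin_two,
      Matrix.mul_apply, Fin.sum_univ_two] <;>
    (try rfl) <;> (try ring) <;> linear_combination ((d*a+b*c)/2) * h2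

/-- the two-to-one kernel computation in coordinates -/
lemma quad_eq (a b c d a' b' c' d' : ℝ) (hd : a*d - b*c = 1) (hd' : a'*d' - b'*c' = 1)
    (haa : a^2 = a'^2) (hab : a*b = a'*b') (hbb : b^2 = b'^2) (hac : a*c = a'*c')
    (hs : a*d + b*c = a'*d' + b'*c') (hbd : b*d = b'*d') (hcc : c^2 = c'^2)
    (hcd : c*d = c'*d') (hdd : d^2 = d'^2) :
    (a' = a ∧ b' = b ∧ c' = c ∧ d' = d) ∨ (a' = -a ∧ b' = -b ∧ c' = -c ∧ d' = -d) := by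
  have had : a*d = a'*d' := by linarith
  have hbc : b*c = b'*c' := by linarith
  by_cases ha : a = 0
  · have ha' : a' = 0 := by
      have : a'^2 = 0 := by rw [← haa, ha]; ring
      exact pow_eq_zero_iff (by norm_num) |>.mp this
    have hb : b ≠ 0 := by
      intro hb0
      rw [ha, hb0] at hd; norm_num at hd
    have : (b' - b) * (b' + b) = 0 := by nlinarith [hbb]
    rcases mul_eq_zero.mp this with h0 | h0
    · left
      have hbb' : b' = b := by linarith
      refine ⟨by rw [ha, ha'], hbb', ?_, ?_⟩
      · have := hbc; rw [hbb'] at this; exact mul_left_cancel₀ hb this.symm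
      · have := hbd; rw [hbb'] at this; exact mul_left_cancel₀ hb this.symm
    · right
      have hbb' : b' = -b := by linarith
      refine ⟨by rw [ha, ha']; ring, hbb', ?_, ?_⟩
      · have h' : b * c = b * (-c') := by rw [hbc, hbb']; ring
        have := mul_left_cancel₀ hb h'; linarith
      · have h' : b * d = b * (-d') := by rw [hbd, hbb']; ring
        have := mul_left_cancel₀ hb h'; linarith
  · have : (a' - a) * (a' + a) = 0 := by nlinarith [haa]
    rcases mul_eq_zero.mp this with h0 | h0
    · left
      have haa' : a' = a := by linarith
      refine ⟨haa', ?_, ?_, ?_⟩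
      · have := hab; rw [haa'] at this; exact mul_left_cancel₀ ha this.symm
      · have := hac; rw [haa'] at this; exact mul_left_cancel₀ ha this.symm
      · have := had; rw [haa'] at this; exact mul_left_cancel₀ ha this.symm
    · right
      have haa' : a' = -a := by linarith
      refine ⟨haa', ?_, ?_, ?_⟩
      · have h' : a * b = a * (-b') := by rw [hab, haa']; ring
        have := mul_left_cancel₀ ha h'; linarith
      · have h' : a * c = a * (-c') := by rw [hac, haa']; ring
        have := mul_left_cancel₀ ha h'; linarith
      · have h' : a * d = a * (-d') := by rw [had, haa']; ring
        have := mul_left_cancel₀ ha h'; linarith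


/-- **`SL(2,ℝ)` is a double cover of its image in `O(1,2)`.**
For `m ∈ SL(2,ℝ)`, `O(m) = I₃` iff `m = ±I₂`; consequently `O(m) = O(m')` iff `m' = ±m`,
so `m ↦ O(m)` is exactly two-to-one. -/
theorem stmt_3 (m m' : Matrix (Fin 2) (Fin 2) ℝ)
    (hm : m.det = 1) (hm' : m'.det = 1) :
    (Omat m = 1 ↔ m = 1 ∨ m = -1) ∧
    (Omat m = Omat m' ↔ m' = m ∨ m' = -m) := by
  have hsne : Real.sqrt 2 ≠ 0 := by positivity
  obtain ⟨a, b, c, d, rfl⟩ : ∃ a b c d, m = !![a,b;c,d] :=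
    ⟨m 0 0, m 0 1, m 1 0, m 1 1, Matrix.etaExpand_eq m |>.symm⟩
  obtain ⟨a', b', c', d', rfl⟩ : ∃ a b c d, m' = !![a,b;c,d] :=
    ⟨m' 0 0, m' 0 1, m' 1 0, m' 1 1, Matrix.etaExpand_eq m' |>.symm⟩
  rw [Matrix.det_fin_two_of] at hm hm'
  have hO := Omat_explicit a b c d hm
  have hO' := Omat_explicit a' b' c' d' hm'
  constructor
  · constructor
    · intro h
      rw [hO, ← Matrix.ext_iff] at h
      have e00 := h 0 0
      have e02 := h 0 2
      have e20 := h 2 0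
      have e11 := h 1 1
      simp [Matrix.one_apply] at e00 e02 e20 e11
      have hb : b = 0 := by nlinarith [sq_nonneg b]
      have hc : c = 0 := by nlinarith [sq_nonneg c]
      rcases e00 with ha | ha
      · left
        have hd : d = 1 := by rw [ha, hb, hc] at hm; linarith
        rw [ha, hb, hc, hd, Matrix.one_fin_two]
      · right
        have hd : d = -1 := by rw [ha, hb, hc] at hm; linarith
        rw [ha, hb, hc, hd]
        ext i j
        fin_cases i <;> fin_cases j <;>
          simp [Matrix.neg_apply, Matrix.one_apply]
    · rintro (h | h)
      · have h1 : a = 1 ∧ b = 0 ∧ c = 0 ∧ d = 1 := by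
          rw [Matrix.one_fin_two] at h
          have := Matrix.ext_iff.mpr h
          exact ⟨by simpa using this 0 0, by simpa using this 0 1,
                 by simpa using this 1 0, by simpa using this 1 1⟩
        obtain ⟨h1, h2, h3, h4⟩ := h1
        rw [hO, h1, h2, h3, h4, Matrix.one_fin_three]
        ext i j
        fin_cases i <;> fin_cases j <;> norm_num
      · have h1 : a = -1 ∧ b = 0 ∧ c = 0 ∧ d = -1 := by
          have := Matrix.ext_iff.mpr h
          exact ⟨by simpa using this 0 0, by simpa using this 0 1,
                 by simpa using this 1 0, by simpa using this 1 1⟩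
        obtain ⟨h1, h2, h3, h4⟩ := h1
        rw [hO, h1, h2, h3, h4, Matrix.one_fin_three]
        ext i j
        fin_cases i <;> fin_cases j <;> norm_num
  · constructor
    · intro h
      rw [hO, hO', ← Matrix.ext_iff] at h
      have e00 := h 0 0; have e01 := h 0 1; have e02 := h 0 2
      have e10 := h 1 0; have e11 := h 1 1; have e12 := h 1 2
      have e20 := h 2 0; have e21 := h 2 1; have e22 := h 2 2
      simp at e00 e01 e02 e10 e11 e12 e20 e21 e22
      rcases quad_eq a b c d a' b' c' d' hm hm' e00 e01 e02 e10 e11 e12 e20 e21 e22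
        with ⟨h1, h2, h3, h4⟩ | ⟨h1, h2, h3, h4⟩
      · left; rw [h1, h2, h3, h4]
      · right
        rw [h1, h2, h3, h4]
        ext i j
        fin_cases i <;> fin_cases j <;> simp
    · rintro (h | h)
      · rw [h]
      · have h1 : a' = -a ∧ b' = -b ∧ c' = -c ∧ d' = -d := by
          have := Matrix.ext_iff.mpr h
          exact ⟨by simpa using this 0 0, by simpa using this 0 1,
                 by simpa using this 1 0, by simpa using this 1 1⟩
        obtain ⟨h1, h2, h3, h4⟩ := h1
        rw [hO, hO', h1, h2, h3, h4]
        ext i j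
        fin_cases i <;> fin_cases j <;> simp <;> ring
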